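/- arXiv:2212.08027 — 3 statements merged into one kernel-verified Lean document; each statement's English description precedes it below -/
import Mathlib

section
/- Let M₁ and M₂ be structures in languages L₁ and L₂ respectively, with the same domain M. Suppose that for all tuples ā, b̄ from M (of equal length), the quantifier-free type of ā equals that of b̄ in M₁ if and only if the quantifier-free type of ā equals that of b̄ in M₂. Then M₁ has the Embedding Ramsey Property if and only if M₂ has the Embedding Ramsey Property. -/
open FirstOrder Language CategoryTheory

/-- The quantifier-free type of a tuple: the set of quantifier-free formulas it satisfies. -/
def qftp (L : Language) (M : Type*) [L.Structure M] {α : Type*} (v : α → M) :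
    Set (L.Formula α) :=
  {φ | BoundedFormula.IsQF φ ∧ φ.Realize v}

/-- `s` is a copy (in `N`) of the tuple `v` (from `M`): it is the range of an enumeration
having the same quantifier-free type as `v`. -/
def IsCopyOf (L : Language) {M N : Type*} [L.Structure M] [L.Structure N] {α : Type*}
    (v : α → M) (s : Set N) : Prop :=
  ∃ e : α → N, Set.range e = s ∧ qftp L N e = qftp L M v

/-- The structural partition arrow for copies: every 2-colouring of subsets of `N` admits a
copy `s ⊆ C` of `b` such that all copies of `a` inside `s` get the same colour. -/
def CopyArrow (L : Language) {M N : Type*} [L.Structure M] [L.Structure N] {α β : Type*}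
    (a : α → M) (b : β → M) (C : Set N) : Prop :=
  ∀ χ : Set N → Fin 2, ∃ s : Set N, s ⊆ C ∧ IsCopyOf L b s ∧
    ∀ t u : Set N, t ⊆ s → u ⊆ s → IsCopyOf L a t → IsCopyOf L a u → χ t = χ u

/-- A structure has the Embedding Ramsey Property if for all finite subsets `A ⊆ B` of `M`
(given by enumerations) there is a finite subset `C` of `M` with `C → (B)^A_2`. -/
def StructERP (L : Language) (M : Type*) [L.Structure M] : Prop :=
  ∀ (n m : ℕ) (a : Fin n → M) (b : Fin m → M), Set.range a ⊆ Set.range b →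
    ∃ (k : ℕ) (c : Fin k → M), CopyArrow L a b (Set.range c)

theorem structERP_aux {L₁ L₂ : Language} {M : Type*}
    [L₁.Structure M] [L₂.Structure M]
    (h : ∀ (n : ℕ) (a b : Fin n → M), qftp L₁ M a = qftp L₁ M b ↔ qftp L₂ M a = qftp L₂ M b) :
    StructERP L₁ M → StructERP L₂ M := by
  intro h1 n m a b hab
  obtain ⟨k, c, hc⟩ := h1 n m a b hab
  refine ⟨k, c, fun χ => ?_⟩
  obtain ⟨s, hsC, ⟨e, he, het⟩, hmono⟩ := hc χ
  refine ⟨s, hsC, ⟨e, he, (h m e b).mp het⟩,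
    fun t u ht hu ⟨et, het', hett⟩ ⟨eu, heu', heuu⟩ => ?_⟩
  exact hmono t u ht hu ⟨et, het', (h n et a).mpr hett⟩ ⟨eu, heu', (h n eu a).mpr heuu⟩

/-- If two structures on the same domain have the same equality relation on quantifier-free
types of same-length tuples, then one has the Embedding Ramsey Property iff the other does. -/
theorem structERP_iff_of_qftp_eq_iff (L₁ L₂ : Language) (M : Type*)
    [L₁.Structure M] [L₂.Structure M]
    (h : ∀ (n : ℕ) (a b : Fin n → M), qftp L₁ M a = qftp L₁ M b ↔ qftp L₂ M a = qftp L₂ M b) :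
    StructERP L₁ M ↔ StructERP L₂ M :=
  ⟨structERP_aux h, structERP_aux (fun n a b => (h n a b).symm)⟩
end

section
/- Let C be a class of finitely generated L-structures with the finitary Embedding Ramsey Property and the embedding local finiteness property (for all B ∈ C and finite A ⊆ B, the set of copies of A in B is finite). Then C has the infinitary Embedding Ramsey Property: for any M ∈ C, any finitely generated substructure B ⊆ M and finite A ⊆ B, there is N ∈ C and a finitely generated C' ⊆ N with C' → (B)^A_2. -/
open FirstOrder Language CategoryTheory

/-- The class `K` has the finitary Embedding Ramsey Property. -/
def ClassFERP (L : Language) (K : Set (Bundled L.Structure)) : Prop :=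
  ∀ M ∈ K, ∀ (n m : ℕ) (a : Fin n → ↥M) (b : Fin m → ↥M), Set.range a ⊆ Set.range b →
    ∃ N ∈ K, ∃ C : Set ↥N, C.Finite ∧ CopyArrow L a b C

/-- The class `K` has the embedding local finiteness property: for every `B ∈ K` and finite
subset `A` of `B`, the set of copies of `A` in `B` is finite. -/
def ClassELF (L : Language) (K : Set (Bundled L.Structure)) : Prop :=
  ∀ B ∈ K, ∀ (n : ℕ) (a : Fin n → ↥B), {s : Set ↥B | IsCopyOf L a s}.Finite

/-- The infinitary Embedding Ramsey Property (with finite pattern `A`): for `M ∈ K`,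
`B` a finitely generated substructure of `M` and `A ⊆ B` finite, there are `N ∈ K` and a
finitely generated substructure `C ⊆ N` with `C → (B)^A_2`. -/
def ClassInfERPfin (L : Language) (K : Set (Bundled L.Structure)) : Prop :=
  ∀ M ∈ K, ∀ B : L.Substructure ↥M, B.FG →
    ∀ (n : ℕ) (a : Fin n → ↥M), Set.range a ⊆ (B : Set ↥M) →
      ∃ N ∈ K, ∃ C : L.Substructure ↥N, C.FG ∧
        CopyArrow L a (Subtype.val : ↥B → ↥M) (C : Set ↥N)

theorem isQF_subst {L : Language} {α β : Type*} {n : ℕ} {φ : L.BoundedFormula α n}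
    (h : φ.IsQF) (f : α → L.Term β) : (φ.subst f).IsQF := by
  induction h with
  | falsum => exact BoundedFormula.IsQF.falsum
  | of_isAtomic h =>
    cases h with
    | equal t₁ t₂ => exact (BoundedFormula.IsAtomic.equal _ _).isQF
    | rel R ts => exact (BoundedFormula.IsAtomic.rel _ _).isQF
  | imp _ _ ih1 ih2 => exact ih1.imp ih2

theorem qftp_eq_iff {L : Language} {M N : Type*} [L.Structure M] [L.Structure N] {α : Type*}
    {e : α → N} {v : α → M} (h : qftp L N e = qftp L M v) {φ : L.Formula α}
    (hφ : φ.IsQF) : φ.Realize e ↔ φ.Realize v := by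
  constructor <;> intro hr
  · have hm : φ ∈ qftp L N e := ⟨hφ, hr⟩
    rw [h] at hm; exact hm.2
  · have hm : φ ∈ qftp L M v := ⟨hφ, hr⟩
    rw [← h] at hm; exact hm.2

theorem realize_subst_formula {L : Language} {M : Type*} [L.Structure M] {α β : Type*}
    (φ : L.Formula α) (f : α → L.Term β) (v : β → M) :
    Formula.Realize (φ.subst f) v ↔ φ.Realize (fun x => (f x).realize v) :=
  BoundedFormula.realize_subst

theorem qftp_subst_eq {L : Language} {M N : Type*} [L.Structure M] [L.Structure N] {m : ℕ}
    {e₀ : Fin m → N} {b' : Fin m → M} (h : qftp L N e₀ = qftp L M b') {α : Type*}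
    (f : α → L.Term (Fin m)) :
    qftp L N (fun x => (f x).realize e₀) = qftp L M (fun x => (f x).realize b') := by
  ext φ
  simp only [qftp, Set.mem_setOf_eq]
  constructor <;> rintro ⟨hqf, hr⟩ <;> refine ⟨hqf, ?_⟩
  · rw [← realize_subst_formula] at hr
    rw [← realize_subst_formula]
    exact (qftp_eq_iff h (isQF_subst hqf f)).mp hr
  · rw [← realize_subst_formula] at hr
    rw [← realize_subst_formula]
    exact (qftp_eq_iff h (isQF_subst hqf f)).mpr hr

/-- A class of finitely generated structures with the finitary Embedding Ramsey Property and
the embedding local finiteness property has the infinitary Embedding Ramsey Property. -/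
theorem infERP_of_fERP_of_elf (L : Language) (K : Set (Bundled L.Structure))
    (hfg : ∀ M ∈ K, Structure.FG L ↥M)
    (hferp : ClassFERP L K) (helf : ClassELF L K) :
    ClassInfERPfin L K := by
  classical
  intro M hM B hB n a ha
  -- the union of all copies of `a` in `M` is finite
  have hcopfin : {s : Set ↥M | IsCopyOf L a s}.Finite := helf M hM n a
  set U : Set ↥M := ⋃₀ {s : Set ↥M | IsCopyOf L a s} with hU
  have hUfin : U.Finite := by
    refine Set.Finite.sUnion hcopfin ?_
    rintro s ⟨e, rfl, -⟩
    exact Set.finite_range e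
  obtain ⟨S, hS⟩ := hB
  set F : Set ↥M := (↑S : Set ↥M) ∪ U with hF
  have hFfin : F.Finite := (S.finite_toSet).union hUfin
  -- enumerate `F` by a tuple `b'`
  haveI : Fintype F := hFfin.fintype
  set m : ℕ := Fintype.card F with hm
  set b' : Fin m → ↥M := fun i => ((Fintype.equivFin F).symm i : ↥M) with hb'
  have hrangeb' : Set.range b' = F := by
    have : Set.range b' = Subtype.val '' Set.range (Fintype.equivFin F).symm := by
      rw [← Set.range_comp]; rfl
    rw [this, Equiv.range_eq_univ, Set.image_univ, Subtype.range_coe]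
  -- range a is a copy of a, hence inside F
  have haU : Set.range a ⊆ U := by
    intro x hx
    exact Set.mem_sUnion.2 ⟨Set.range a, ⟨a, rfl, rfl⟩, hx⟩
  have hab' : Set.range a ⊆ Set.range b' := by
    rw [hrangeb']
    exact haU.trans Set.subset_union_right
  obtain ⟨N, hN, C₀, hC₀fin, hC₀arrow⟩ := hferp M hM n m a b' hab'
  refine ⟨N, hN, Substructure.closure L C₀, Substructure.fg_closure hC₀fin, ?_⟩
  -- terms representing elements of B over b'
  have hterm : ∀ x : ↥B, ∃ t : L.Term (Fin m), t.realize b' = (x : ↥M) := by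
    intro x
    have hxB : (x : ↥M) ∈ Substructure.closure L (Set.range b') := by
      rw [hrangeb']
      have : B ≤ Substructure.closure L F :=
        hS ▸ Substructure.closure_mono Set.subset_union_left
      exact this x.2
    obtain ⟨t, ht⟩ := Substructure.mem_closure_iff_exists_term.1 hxB
    refine ⟨t.relabel (fun y => Classical.choose y.2), ?_⟩
    rw [Term.realize_relabel, ← ht]
    congr 1
    funext y
    exact Classical.choose_spec y.2
  choose f hf using hterm
  intro χ
  obtain ⟨s₀, hs₀C, ⟨e₀, he₀r, he₀q⟩, hmono⟩ := hC₀arrow χ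
  set e : ↥B → ↥N := fun x => (f x).realize e₀ with he
  refine ⟨Set.range e, ?_, ⟨e, rfl, ?_⟩, ?_⟩
  · -- range e ⊆ closure C₀
    rintro _ ⟨x, rfl⟩
    refine Term.realize_mem _ _ ?_
    intro i
    exact Substructure.subset_closure (hs₀C (he₀r ▸ Set.mem_range_self i))
  · -- qftp e = qftp val
    have := qftp_subst_eq he₀q f
    rw [← he] at this
    convert this using 2
    funext x
    exact (hf x).symm
  · -- monochromaticity
    have hkey : ∀ t : Set ↥N, t ⊆ Set.range e → IsCopyOf L a t → t ⊆ s₀ := by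
      intro t ht hct
      obtain ⟨g', hg'r, hg'q⟩ := hct
      have hsub : ∀ i : Fin n, ∃ x : ↥B, e x = g' i := by
        intro i
        exact ht (hg'r ▸ Set.mem_range_self i)
      choose g hg using hsub
      have heg : (fun i => (f (g i)).realize e₀) = g' := funext hg
      -- the pullback of t to M is a copy of a in M
      have hq : qftp L ↥M (fun i => (f (g i)).realize b') = qftp L ↥M a := by
        have h2 := qftp_subst_eq he₀q (f ∘ g)
        have h3 : (fun x => Term.realize e₀ ((f ∘ g) x)) = g' := funext hg
        rw [h3, hg'q] at h2
        exact h2.symm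
      have hcopM : IsCopyOf L a (Set.range fun i => (f (g i)).realize b') :=
        ⟨_, rfl, hq⟩
      have hrsub : Set.range (fun i => (f (g i)).realize b') ⊆ Set.range b' := by
        rw [hrangeb']
        exact (Set.subset_sUnion_of_mem (show _ ∈ {s | IsCopyOf L a s} from hcopM)).trans Set.subset_union_right
      -- each point of t lies in s₀
      rw [← hg'r]
      rintro _ ⟨i, rfl⟩
      obtain ⟨j, hj⟩ := hrsub (Set.mem_range_self i)
      have heq : (f (g i)).realize e₀ = e₀ j := by
        have hQF : (Term.equal (f (g i)) (Term.var j) : L.Formula (Fin m)).IsQF :=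
          (BoundedFormula.IsAtomic.equal _ _).isQF
        have hb : (Term.equal (f (g i)) (Term.var j) : L.Formula (Fin m)).Realize b' := by
          rw [Formula.realize_equal]
          exact hj.symm
        have := (qftp_eq_iff he₀q hQF).2 hb
        rwa [Formula.realize_equal] at this
      rw [← hg i, ← he₀r]
      exact ⟨j, heq.symm⟩
    intro t u htsub husub hct hcu
    exact hmono t u (hkey t htsub hct) (hkey u husub hcu) hct hcu
end

section
/- Let C be a class of L-structures with the infinitary Embedding Ramsey Property restricted to finite A: for any M ∈ C, finitely generated substructure B ⊆ M, and finite subset A ⊆ B, there is N ∈ C and a finitely generated C' ⊆ N such that C' → (B)^A_2. Then C has the full infinitary Embedding Ramsey Property, where A is also allowed to be an arbitrary finitely generated substructure. -/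
open FirstOrder Language CategoryTheory

/-- The full infinitary Embedding Ramsey Property: the pattern `A` may be any finitely
generated substructure. -/
def ClassInfERP (L : Language) (K : Set (Bundled L.Structure)) : Prop :=
  ∀ M ∈ K, ∀ A B : L.Substructure ↥M, A.FG → B.FG → A ≤ B →
    ∃ N ∈ K, ∃ C : L.Substructure ↥N, C.FG ∧
      CopyArrow L (Subtype.val : ↥A → ↥M) (Subtype.val : ↥B → ↥M) (C : Set ↥N)


section Aux

open FirstOrder Language

variable {L : Language} {M N : Type*} [L.Structure M] [L.Structure N] {α : Type*}

lemma qftp_realize_iff {v : α → M} {e : α → N} (hq : qftp L N e = qftp L M v)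
    {φ : L.Formula α} (hφ : φ.IsQF) : φ.Realize e ↔ φ.Realize v := by
  constructor
  · intro hr
    have : φ ∈ qftp L N e := ⟨hφ, hr⟩
    rw [hq] at this
    exact this.2
  · intro hr
    have : φ ∈ qftp L M v := ⟨hφ, hr⟩
    rw [← hq] at this
    exact this.2

lemma qftp_comp {v : α → M} {e : α → N} (hq : qftp L N e = qftp L M v) {n : ℕ}
    (g : Fin n → α) : qftp L N (e ∘ g) = qftp L M (v ∘ g) := by
  ext φ
  simp only [qftp, Set.mem_setOf_eq]
  constructor
  · rintro ⟨hφ, hr⟩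
    refine ⟨hφ, ?_⟩
    have h1 : (φ.relabel g).Realize e := Formula.realize_relabel.2 hr
    have h2 := (qftp_realize_iff hq (hφ.relabel _)).1 h1
    exact Formula.realize_relabel.1 h2
  · rintro ⟨hφ, hr⟩
    refine ⟨hφ, ?_⟩
    have h1 : (φ.relabel g).Realize v := Formula.realize_relabel.2 hr
    have h2 := (qftp_realize_iff hq (hφ.relabel _)).2 h1
    exact Formula.realize_relabel.1 h2

lemma term_equal_isQF (t₁ t₂ : L.Term α) : (t₁.equal t₂).IsQF :=
  (BoundedFormula.IsAtomic.equal _ _).isQF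

/-- If the range of `v` is generated by `v ∘ g`, then for any `e` with the same
quantifier-free type, the range of `e` is the substructure generated by `e ∘ g`. -/
lemma range_eq_closure_of_qftp_eq {v : α → M} {e : α → N}
    (hq : qftp L N e = qftp L M v) {n : ℕ} (g : Fin n → α)
    (heq : Set.range v = (Substructure.closure L (Set.range (v ∘ g)) : Set M)) :
    Set.range e = (Substructure.closure L (Set.range (e ∘ g)) : Set N) := by
  have hrg : ∀ (y : ↥(Set.range (v ∘ g))), ∃ i : Fin n, (v ∘ g) i = (y : M) :=
    fun y => y.2
  have hrg' : ∀ (y : ↥(Set.range (e ∘ g))), ∃ i : Fin n, (e ∘ g) i = (y : N) :=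
    fun y => y.2
  apply Set.Subset.antisymm
  · rintro _ ⟨c, rfl⟩
    have hc : v c ∈ Substructure.closure L (Set.range (v ∘ g)) := by
      have : v c ∈ Set.range v := ⟨c, rfl⟩
      rwa [heq] at this
    obtain ⟨t, ht⟩ := Substructure.mem_closure_iff_exists_term.1 hc
    classical
    set h0 : ↥(Set.range (v ∘ g)) → Fin n := fun y => (hrg y).choose with hh0
    have hcomp : ((↑) : ↥(Set.range (v ∘ g)) → M) = (v ∘ g) ∘ h0 := by
      funext y
      exact ((hrg y).choose_spec).symm
    set τ : L.Term (Fin n) := t.relabel h0 with hτ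
    have hτv : τ.realize (v ∘ g) = v c := by
      rw [hτ, Term.realize_relabel, ← hcomp, ht]
    set φ : L.Formula α := (Term.var c).equal (τ.relabel g) with hφ
    have hφv : φ.Realize v := by
      rw [hφ, Formula.realize_equal, Term.realize_relabel]
      simp [hτv]
    have hφe : φ.Realize e := (qftp_realize_iff hq (term_equal_isQF _ _)).2 hφv
    rw [hφ, Formula.realize_equal, Term.realize_relabel] at hφe
    simp only [Term.realize_var] at hφe
    rw [hφe]
    exact τ.realize_mem _ (fun i => Substructure.subset_closure ⟨i, rfl⟩)
  · intro x hx
    obtain ⟨t, ht⟩ := Substructure.mem_closure_iff_exists_term.1 hx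
    classical
    set h1 : ↥(Set.range (e ∘ g)) → Fin n := fun y => (hrg' y).choose with hh1
    have hcomp : ((↑) : ↥(Set.range (e ∘ g)) → N) = (e ∘ g) ∘ h1 := by
      funext y
      exact ((hrg' y).choose_spec).symm
    set τ : L.Term (Fin n) := t.relabel h1 with hτ
    have hτe : τ.realize (e ∘ g) = x := by
      rw [hτ, Term.realize_relabel, ← hcomp, ht]
    have hm : τ.realize (v ∘ g) ∈ Set.range v := by
      rw [heq]
      exact τ.realize_mem _ (fun i => Substructure.subset_closure ⟨i, rfl⟩)
    obtain ⟨c, hc⟩ := hm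
    set φ : L.Formula α := (τ.relabel g).equal (Term.var c) with hφ
    have hφv : φ.Realize v := by
      rw [hφ, Formula.realize_equal, Term.realize_relabel]
      simp [hc]
    have hφe : φ.Realize e := (qftp_realize_iff hq (term_equal_isQF _ _)).2 hφv
    rw [hφ, Formula.realize_equal, Term.realize_relabel] at hφe
    simp only [Term.realize_var] at hφe
    rw [← hτe, hφe]
    exact ⟨c, rfl⟩

end Aux

/-- If a class has the infinitary Embedding Ramsey Property restricted to finite patterns
`A`, then it has the full infinitary Embedding Ramsey Property, where the pattern is allowed
to be an arbitrary finitely generated substructure. -/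
theorem infERP_of_infERPfin (L : Language) (K : Set (Bundled L.Structure))
    (h : ClassInfERPfin L K) : ClassInfERP L K := by
  intro M hM A B hA hB hAB
  -- choose a finite generating tuple for A
  obtain ⟨S, hS⟩ := hA
  classical
  set n := S.card with hn
  set a : Fin n → ↥M := fun i => (S.equivFin.symm i : ↥M) with ha
  have hrange : Set.range a = (S : Set ↥M) := by
    ext x
    constructor
    · rintro ⟨i, rfl⟩
      exact (S.equivFin.symm i).2
    · intro hx
      exact ⟨S.equivFin ⟨x, hx⟩, by simp [ha]⟩
  have hacl : Substructure.closure L (Set.range a) = A := by rw [hrange, hS]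
  have haA : Set.range a ⊆ (A : Set ↥M) := hacl ▸ Substructure.subset_closure
  have haB : Set.range a ⊆ (B : Set ↥M) := haA.trans hAB
  obtain ⟨N, hN, C, hC, harrow⟩ := h M hM B hB n a haB
  refine ⟨N, hN, C, hC, ?_⟩
  intro χ
  -- colour a copy of `a` by the colour of the substructure it generates
  obtain ⟨s, hsC, hscopy, hmono⟩ :=
    harrow (fun t => χ (Substructure.closure L t : Set ↥N))
  refine ⟨s, hsC, hscopy, ?_⟩
  intro t u ht hu hct hcu
  obtain ⟨e, rfl, hqe⟩ := hct
  obtain ⟨f, rfl, hqf⟩ := hcu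
  -- a lift of the tuple `a` into `A`
  set a' : Fin n → ↥A := fun i => ⟨a i, haA ⟨i, rfl⟩⟩ with ha'
  have hva' : (Subtype.val : ↥A → ↥M) ∘ a' = a := rfl
  have hgen : Set.range (Subtype.val : ↥A → ↥M) =
      (Substructure.closure L (Set.range ((Subtype.val : ↥A → ↥M) ∘ a')) : Set ↥M) := by
    rw [hva', hacl, Subtype.range_coe]
  have he : Set.range e = (Substructure.closure L (Set.range (e ∘ a')) : Set ↥N) :=
    range_eq_closure_of_qftp_eq hqe a' hgen
  have hf : Set.range f = (Substructure.closure L (Set.range (f ∘ a')) : Set ↥N) :=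
    range_eq_closure_of_qftp_eq hqf a' hgen
  have hce : IsCopyOf L a (Set.range (e ∘ a')) :=
    ⟨e ∘ a', rfl, by rw [qftp_comp hqe a', hva']⟩
  have hcf : IsCopyOf L a (Set.range (f ∘ a')) :=
    ⟨f ∘ a', rfl, by rw [qftp_comp hqf a', hva']⟩
  have hsub_e : Set.range (e ∘ a') ⊆ Set.range e := Set.range_comp_subset_range _ _
  have hsub_f : Set.range (f ∘ a') ⊆ Set.range f := Set.range_comp_subset_range _ _
  have := hmono (Set.range (e ∘ a')) (Set.range (f ∘ a'))
    (hsub_e.trans ht) (hsub_f.trans hu) hce hcf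
  simpa only [← he, ← hf] using this
end
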